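/- In an MCS on a connected graph G with a nonempty visited prefix τ, suppose x, y are unvisited vertices of maximum label lying in different connected components of the induced subgraph on maximum-label vertices, and suppose some vertex z is a visited common neighbor of both x and y while x and y are nonadjacent. If x and y are joined by an induced path x - p_1 - ... - p_ℓ - y among unvisited vertices where some p_i is nonadjacent to z, then G contains a chordless cycle of length at least 4; hence G is not chordal. -/

import Mathlib

/-- A graph is chordal if every cycle of length at least 4 has a chord. -/
def IsChordal {V : Type} (G : SimpleGraph V) : Prop :=
  ∀ ⦃v : V⦄ (c : G.Walk v v), c.IsCycle → 4 ≤ c.length →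
    ∃ u w : V, u ∈ c.support ∧ w ∈ c.support ∧ G.Adj u w ∧ s(u, w) ∉ c.edges

/-- Number of neighbors of `v` among the visited vertices `pre`. -/
def mcsLabel {V : Type} [DecidableEq V] (G : SimpleGraph V) [DecidableRel G.Adj]
    (pre : List V) (v : V) : ℕ :=
  pre.countP (fun u => decide (G.Adj u v))

/-- `τ` is (a prefix of) a Maximum Cardinality Search ordering. -/
def IsMCSPrefix {V : Type} [DecidableEq V] (G : SimpleGraph V) [DecidableRel G.Adj]
    (τ : List V) : Prop :=
  τ.Nodup ∧ ∀ i, (h : i < τ.length) → ∀ w : V, w ∉ τ.take i →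
    mcsLabel G (τ.take i) w ≤ mcsLabel G (τ.take i) (τ.get ⟨i, h⟩)

private lemma edge_mem_path_ends {V : Type} {G : SimpleGraph V} {a b : V}
    (p : G.Walk a b) (hp : p.IsPath) (hab : a ≠ b) (h : s(a, b) ∈ p.edges) :
    p.support = [a, b] := by
  cases p with
  | nil => simp at h
  | @cons _ c _ hadj q =>
    rw [SimpleGraph.Walk.cons_isPath_iff] at hp
    rw [SimpleGraph.Walk.edges_cons, List.mem_cons] at h
    rcases h with h | h
    · have hbc : b = c := by
        rcases Sym2.eq_iff.mp h with ⟨_, h2⟩ | ⟨h1, h2⟩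
        · exact h2
        · exact absurd h2.symm hab
      subst hbc
      have : q = SimpleGraph.Walk.nil := SimpleGraph.Walk.isPath_iff_eq_nil.mp hp.1
      subst this
      simp
    · exact absurd (SimpleGraph.Walk.fst_mem_support_of_mem_edges q h) hp.2

private lemma key_lemma {V : Type} [DecidableEq V] (G : SimpleGraph V) :
    ∀ n : ℕ, ∀ (x y z : V) (p : G.Walk x y), p.length ≤ n → p.IsPath →
    (∀ u w : V, u ∈ p.support → w ∈ p.support → G.Adj u w → s(u, w) ∈ p.edges) →
    G.Adj z x → G.Adj z y → ¬ G.Adj x y → z ∉ p.support →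
    (∃ v ∈ p.support, v ≠ x ∧ v ≠ y ∧ ¬ G.Adj v z) → ¬ IsChordal G := by
  intro n
  induction n with
  | zero =>
    intro x y z p hlen hp hind hzx hzy hnxy hzp hpi
    obtain ⟨v, hv, hvx, hvy, hvz⟩ := hpi
    cases p with
    | nil => simp at hv; exact (hvx hv).elim
    | cons h q => simp at hlen
  | succ n ih =>
    intro x y z p hlen hp hind hzx hzy hnxy hzp hpi hchord
    obtain ⟨v, hv, hvx, hvy, hvz⟩ := hpi
    have hxyne : x ≠ y := by
      intro h; subst h
      have : p = SimpleGraph.Walk.nil := SimpleGraph.Walk.isPath_iff_eq_nil.mp hp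
      subst this; simp at hv; exact hvx hv
    have h2 : 2 ≤ p.length := by
      cases p with
      | nil => simp at hv; exact absurd hv hvx
      | @cons _ c _ h q =>
        cases q with
        | nil => simp at hv; rcases hv with hv | hv; exacts [absurd hv hvx, absurd hv hvy]
        | cons h' q' => simp [SimpleGraph.Walk.length_cons]
    -- the big cycle
    set c : G.Walk x x :=
      p.append (SimpleGraph.Walk.cons hzy.symm (SimpleGraph.Walk.cons hzx SimpleGraph.Walk.nil))
      with hc
    have hcs : c.support = p.support ++ [z, x] := by
      simp [hc, SimpleGraph.Walk.support_append]
    have hce : c.edges = p.edges ++ [s(y, z), s(z, x)] := by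
      simp [hc, SimpleGraph.Walk.edges_append]
    have hxnt : x ∉ p.support.tail := by
      have := hp.support_nodup
      rw [SimpleGraph.Walk.support_eq_cons] at this
      exact (List.nodup_cons.mp this).1
    have hznt : z ∉ p.support.tail := fun h => hzp (List.mem_of_mem_tail h)
    have hyzne : s(y, z) ≠ s(z, x) := by
      intro h
      rcases Sym2.eq_iff.mp h with ⟨h1, h2⟩ | ⟨h1, h2⟩
      · exact hzy.ne' h1
      · exact hxyne h1.symm
    have hcyc : c.IsCycle := by
      refine ⟨⟨⟨?_⟩, ?_⟩, ?_⟩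
      · rw [hce]
        rw [List.nodup_append']
        refine ⟨hp.isTrail.edges_nodup, by simp [hyzne], ?_⟩
        intro e he he'
        simp only [List.mem_cons, List.mem_singleton, List.not_mem_nil, or_false] at he'
        rcases he' with rfl | rfl
        · exact hzp (SimpleGraph.Walk.snd_mem_support_of_mem_edges p he)
        · exact hzp (SimpleGraph.Walk.fst_mem_support_of_mem_edges p he)
      · intro h
        have := congrArg SimpleGraph.Walk.length h
        simp [hc] at this
      · have hct : c.support.tail = p.support.tail ++ [z, x] := by
          rw [hcs, SimpleGraph.Walk.support_eq_cons]; rfl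
        rw [hct, List.nodup_append']
        refine ⟨(List.nodup_cons.mp (by
            rw [← SimpleGraph.Walk.support_eq_cons]; exact hp.support_nodup)).2, ?_, ?_⟩
        · simp [hzx.ne]
        · intro a ha ha'
          simp only [List.mem_cons, List.mem_singleton, List.not_mem_nil, or_false] at ha'
          rcases ha' with rfl | rfl
          · exact hznt ha
          · exact hxnt ha
    have hlen4 : 4 ≤ c.length := by
      have : c.length = p.length + 2 := by simp [hc, SimpleGraph.Walk.length_append]
      omega
    obtain ⟨u, w, huc, hwc, huw, hne⟩ := hchord c hcyc hlen4
    have hmemc : ∀ a : V, a ∈ c.support → a ∈ p.support ∨ a = z := by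
      intro a ha
      rw [hcs, List.mem_append] at ha
      rcases ha with ha | ha
      · exact Or.inl ha
      · simp only [List.mem_cons, List.mem_singleton, List.not_mem_nil, or_false] at ha
        rcases ha with rfl | rfl
        · exact Or.inr rfl
        · exact Or.inl p.start_mem_support
    -- main chord-with-z case
    have main : ∀ w' : V, w' ∈ p.support → G.Adj z w' → s(z, w') ∉ c.edges → False := by
      intro w' hwp hzw hnotin
      have hwx : w' ≠ x := by
        rintro rfl
        exact hnotin (by rw [hce]; simp)
      have hwy : w' ≠ y := by
        rintro rfl
        refine hnotin (by rw [hce]; simp [Sym2.eq_swap])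
      have hspec := p.take_spec hwp
      set p₁ := p.takeUntil w' hwp with hp1def
      set p₂ := p.dropUntil w' hwp with hp2def
      have hp₁ : p₁.IsPath := hp.takeUntil hwp
      have hp₂ : p₂.IsPath := hp.dropUntil hwp
      have hsub₁ : ∀ a, a ∈ p₁.support → a ∈ p.support :=
        fun a ha => SimpleGraph.Walk.support_takeUntil_subset p hwp ha
      have hsub₂ : ∀ a, a ∈ p₂.support → a ∈ p.support :=
        fun a ha => SimpleGraph.Walk.support_dropUntil_subset p hwp ha
      have hlensum : p₁.length + p₂.length = p.length := by
        conv_rhs => rw [← hspec]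
        rw [SimpleGraph.Walk.length_append]
      have hlen₁ : 1 ≤ p₁.length := by
        by_contra h
        have : p₁.length = 0 := by omega
        exact hwx (SimpleGraph.Walk.eq_of_length_eq_zero this).symm
      have hlen₂ : 1 ≤ p₂.length := by
        by_contra h
        have : p₂.length = 0 := by omega
        exact hwy (SimpleGraph.Walk.eq_of_length_eq_zero this)
      have hnodup : (p₁.support ++ p₂.support.tail).Nodup := by
        rw [← SimpleGraph.Walk.support_append, hspec]; exact hp.support_nodup
      have hdisj := (List.nodup_append'.mp hnodup).2.2
      have hboth : ∀ a, a ∈ p₁.support → a ∈ p₂.support → a = w' := by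
        intro a h1 h2
        rw [SimpleGraph.Walk.support_eq_cons, List.mem_cons] at h2
        rcases h2 with rfl | h2
        · rfl
        · exact absurd h2 (hdisj h1)
      have hind₁ : ∀ a b : V, a ∈ p₁.support → b ∈ p₁.support → G.Adj a b →
          s(a, b) ∈ p₁.edges := by
        intro a b ha hb hab
        have hm : s(a, b) ∈ p.edges := hind a b (hsub₁ a ha) (hsub₁ b hb) hab
        rw [← hspec, SimpleGraph.Walk.edges_append, List.mem_append] at hm
        rcases hm with hm | hm
        · exact hm
        · have ha2 := hboth a ha (SimpleGraph.Walk.fst_mem_support_of_mem_edges _ hm)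
          have hb2 := hboth b hb (SimpleGraph.Walk.snd_mem_support_of_mem_edges _ hm)
          subst ha2; subst hb2; exact absurd rfl hab.ne
      have hind₂ : ∀ a b : V, a ∈ p₂.support → b ∈ p₂.support → G.Adj a b →
          s(a, b) ∈ p₂.edges := by
        intro a b ha hb hab
        have hm : s(a, b) ∈ p.edges := hind a b (hsub₂ a ha) (hsub₂ b hb) hab
        rw [← hspec, SimpleGraph.Walk.edges_append, List.mem_append] at hm
        rcases hm with hm | hm
        · have ha2 := hboth a (SimpleGraph.Walk.fst_mem_support_of_mem_edges _ hm) ha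
          have hb2 := hboth b (SimpleGraph.Walk.snd_mem_support_of_mem_edges _ hm) hb
          subst ha2; subst hb2; exact absurd rfl hab.ne
        · exact hm
      have hz₁ : z ∉ p₁.support := fun h => hzp (hsub₁ z h)
      have hz₂ : z ∉ p₂.support := fun h => hzp (hsub₂ z h)
      have hvw : v ≠ w' := by
        rintro rfl; exact hvz hzw.symm
      have hv12 : v ∈ p₁.support ∨ v ∈ p₂.support := by
        rw [← hspec, SimpleGraph.Walk.mem_support_append_iff] at hv
        exact hv
      rcases hv12 with hv1 | hv2
      · -- apply IH to p₁ : x → w'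
        have hnxw : ¬ G.Adj x w' := by
          intro hxw
          have hedge : s(x, w') ∈ p₁.edges :=
            hind₁ x w' p₁.start_mem_support p₁.end_mem_support hxw
          have := edge_mem_path_ends p₁ hp₁ (Ne.symm hwx) hedge
          rw [this] at hv1
          simp only [List.mem_cons, List.not_mem_nil, or_false] at hv1
          rcases hv1 with hv1 | hv1
          · exact hvx hv1
          · exact hvw hv1
        exact ih x w' z p₁ (by omega) hp₁ hind₁ hzx hzw hnxw hz₁
          ⟨v, hv1, hvx, hvw, hvz⟩ hchord
      · -- apply IH to p₂ : w' → y
        have hnwy : ¬ G.Adj w' y := by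
          intro hwy'
          have hedge : s(w', y) ∈ p₂.edges :=
            hind₂ w' y p₂.start_mem_support p₂.end_mem_support hwy'
          have := edge_mem_path_ends p₂ hp₂ hwy hedge
          rw [this] at hv2
          simp only [List.mem_cons, List.not_mem_nil, or_false] at hv2
          rcases hv2 with hv2 | hv2
          · exact hvw hv2
          · exact hvy hv2
        exact ih w' y z p₂ (by omega) hp₂ hind₂ hzw hzy hnwy hz₂
          ⟨v, hv2, hvw, hvy, hvz⟩ hchord
    rcases hmemc u huc with hup | rfl
    · rcases hmemc w hwc with hwp | rfl
      · exact hne (by rw [hce]; exact List.mem_append_left _ (hind u w hup hwp huw))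
      · exact main u hup huw.symm (by rwa [Sym2.eq_swap] at hne)
    · rcases hmemc w hwc with hwp | rfl
      · exact main w hwp huw hne
      · exact huw.ne rfl

theorem stmt14 {V : Type} [Fintype V] [DecidableEq V] (G : SimpleGraph V)
    [DecidableRel G.Adj] (hconn : G.Connected)
    (τ : List V) (hτ : IsMCSPrefix G τ) (hτne : τ ≠ [])
    (x y : V) (hx : x ∉ τ) (hy : y ∉ τ)
    (hxmax : ∀ u : V, u ∉ τ → mcsLabel G τ u ≤ mcsLabel G τ x)
    (hymax : ∀ u : V, u ∉ τ → mcsLabel G τ u ≤ mcsLabel G τ y)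
    (hdisc : ¬ (G.induce
        {w : V | w ∉ τ ∧ ∀ u : V, u ∉ τ → mcsLabel G τ u ≤ mcsLabel G τ w}).Reachable
        ⟨x, ⟨hx, hxmax⟩⟩ ⟨y, ⟨hy, hymax⟩⟩)
    (z : V) (hz : z ∈ τ) (hzx : G.Adj z x) (hzy : G.Adj z y)
    (hnxy : ¬ G.Adj x y)
    (p : G.Walk x y) (hp : p.IsPath)
    (hind : ∀ u w : V, u ∈ p.support → w ∈ p.support → G.Adj u w →
      s(u, w) ∈ p.edges)
    (hunvis : ∀ v ∈ p.support, v ∉ τ)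
    (hpi : ∃ v ∈ p.support, v ≠ x ∧ v ≠ y ∧ ¬ G.Adj v z) :
    ¬ IsChordal G := by
  have hzp : z ∉ p.support := fun h => hunvis z h hz
  exact key_lemma G p.length x y z p le_rfl hp hind hzx hzy hnxy hzp hpi
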